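/- For every ρ > 0 and every z ∈ ℝ, the generating function U(ρ,z) = A·log(ρ²) + Σ_{i=1}^r a_i·(2·d_i − (z − z_i)·log((d_i + z − z_i)/(d_i − z + z_i))) satisfies the first–derivative formulas ∂U/∂ρ (ρ,z) = (2/ρ)·(A + Σ_{i=1}^r a_i·d_i) and ∂U/∂z (ρ,z) = −Σ_{i=1}^r a_i·log((d_i + z − z_i)/(d_i − z + z_i)). (Here the partial derivatives are the derivatives of the one-variable functions ρ ↦ U(ρ,z) and z ↦ U(ρ,z).) -/

import Mathlib

open Finset

/-- The distance `d_i(ρ,z) = (ρ² + (z − z_i)²)^{1/2}`. -/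
noncomputable def dd {r : ℕ} (zs : Fin r → ℝ) (ρ z : ℝ) (i : Fin r) : ℝ :=
  Real.sqrt (ρ ^ 2 + (z - zs i) ^ 2)

/-- The generating function `U(ρ,z)`. -/
noncomputable def genU {r : ℕ} (A : ℝ) (a zs : Fin r → ℝ) (ρ z : ℝ) : ℝ :=
  A * Real.log (ρ ^ 2) +
    ∑ i, a i * (2 * dd zs ρ z i -
      (z - zs i) * Real.log ((dd zs ρ z i + z - zs i) / (dd zs ρ z i - z + zs i)))

private lemma term_rho (a w ρ : ℝ) (hρ : 0 < ρ) :
    HasDerivAt (fun t : ℝ => a * (2 * Real.sqrt (t ^ 2 + w ^ 2) -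
      w * Real.log ((Real.sqrt (t ^ 2 + w ^ 2) + w) / (Real.sqrt (t ^ 2 + w ^ 2) - w))))
      (a * (2 * Real.sqrt (ρ ^ 2 + w ^ 2) / ρ)) ρ := by
  set d := Real.sqrt (ρ ^ 2 + w ^ 2) with hdd
  have hpos : (0:ℝ) < ρ ^ 2 + w ^ 2 := by positivity
  have hd0 : 0 < d := Real.sqrt_pos.mpr hpos
  have hd2 : d ^ 2 = ρ ^ 2 + w ^ 2 := Real.sq_sqrt hpos.le
  have hdw : w ^ 2 < d ^ 2 := by nlinarith
  have hplus : 0 < d + w := by nlinarith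
  have hminus : 0 < d - w := by nlinarith
  have hsq : HasDerivAt (fun t : ℝ => Real.sqrt (t ^ 2 + w ^ 2)) (ρ / d) ρ := by
    have h1 : HasDerivAt (fun t : ℝ => t ^ 2 + w ^ 2) (2 * ρ) ρ := by
      simpa using (hasDerivAt_pow 2 ρ).add_const (w ^ 2)
    have h2 := (Real.hasDerivAt_sqrt hpos.ne').comp ρ h1
    refine h2.congr_deriv (Eq.symm ?_)
    rw [← hdd]
    field_simp
  have hnum := hsq.add_const w
  have hden := hsq.sub_const w
  have hq := hnum.div hden hminus.ne'
  have hlog := hq.log (by exact (div_pos hplus hminus).ne')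
  have hfin := ((hsq.const_mul 2).sub (hlog.const_mul w)).const_mul a
  refine hfin.congr_deriv (Eq.symm ?_)
  simp only [Pi.add_apply, Pi.sub_apply, Pi.div_apply, ← hdd]
  have hprod : (d + w) * (d - w) = ρ ^ 2 := by nlinarith
  field_simp
  ring_nf
  linear_combination (2*a*d^2) * hd2

private lemma term_z (a zi ρ z : ℝ) (hρ : 0 < ρ) :
    HasDerivAt (fun t : ℝ => a * (2 * Real.sqrt (ρ ^ 2 + (t - zi) ^ 2) -
      (t - zi) * Real.log ((Real.sqrt (ρ ^ 2 + (t - zi) ^ 2) + (t - zi)) /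
        (Real.sqrt (ρ ^ 2 + (t - zi) ^ 2) - (t - zi)))))
      (-(a * Real.log ((Real.sqrt (ρ ^ 2 + (z - zi) ^ 2) + (z - zi)) /
        (Real.sqrt (ρ ^ 2 + (z - zi) ^ 2) - (z - zi))))) z := by
  set w := z - zi with hw
  set d := Real.sqrt (ρ ^ 2 + w ^ 2) with hdd
  have hpos : (0:ℝ) < ρ ^ 2 + w ^ 2 := by positivity
  have hd0 : 0 < d := Real.sqrt_pos.mpr hpos
  have hd2 : d ^ 2 = ρ ^ 2 + w ^ 2 := Real.sq_sqrt hpos.le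
  have hdw : w ^ 2 < d ^ 2 := by nlinarith
  have hplus : 0 < d + w := by nlinarith
  have hminus : 0 < d - w := by nlinarith
  have hw1 : HasDerivAt (fun t : ℝ => t - zi) 1 z := (hasDerivAt_id z).sub_const zi
  have hsq : HasDerivAt (fun t : ℝ => Real.sqrt (ρ ^ 2 + (t - zi) ^ 2)) (w / d) z := by
    have h1 : HasDerivAt (fun t : ℝ => ρ ^ 2 + (t - zi) ^ 2) (2 * w) z := by
      have := (hw1.pow 2).const_add (ρ ^ 2)
      simpa [hw] using this
    have h2 := (Real.hasDerivAt_sqrt hpos.ne').comp z h1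
    refine h2.congr_deriv (Eq.symm ?_)
    rw [← hdd]
    field_simp
  have hnum := hsq.add hw1
  have hden := hsq.sub hw1
  have hq := hnum.div hden hminus.ne'
  have hlog := hq.log (by exact (div_pos hplus hminus).ne')
  have hprodd := hw1.mul hlog
  have hfin := ((hsq.const_mul 2).sub hprodd).const_mul a
  refine hfin.congr_deriv (Eq.symm ?_)
  simp only [Pi.add_apply, Pi.sub_apply, Pi.div_apply, ← hdd]
  have hprod : (d + w) * (d - w) = ρ ^ 2 := by nlinarith
  have hLkey : ((w / d + 1) * (d - w) - (d + w) * (w / d - 1)) / (d - w) ^ 2 /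
      ((d + w) / (d - w)) = 2 / d := by
    field_simp
    nlinarith [hd2]
  rw [hLkey]
  field_simp
  ring

theorem statement0 {r : ℕ} (hr : 1 ≤ r) (A : ℝ) (hA : 0 < A)
    (zs a : Fin r → ℝ)
    (hz : ∀ i j : Fin r, i < j → zs i < zs j)
    (ha : ∀ i, 0 < a i) (hsum : ∑ i, a i = 1)
    (ρ z : ℝ) (hρ : 0 < ρ) :
    HasDerivAt (fun t => genU A a zs t z)
      ((2 / ρ) * (A + ∑ i, a i * dd zs ρ z i)) ρ ∧
    HasDerivAt (fun t => genU A a zs ρ t)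
      (-∑ i, a i * Real.log ((dd zs ρ z i + z - zs i) / (dd zs ρ z i - z + zs i))) z := by
  constructor
  · have h0 : HasDerivAt (fun t : ℝ => A * Real.log (t ^ 2)) (A * (2 / ρ)) ρ := by
      have h1 : HasDerivAt (fun t : ℝ => t ^ 2) (2 * ρ) ρ := by simpa using hasDerivAt_pow 2 ρ
      have h2 := (h1.log (by positivity)).const_mul A
      refine h2.congr_deriv (Eq.symm ?_)
      field_simp
    have hs : HasDerivAt (fun t : ℝ => ∑ i, a i * (2 * Real.sqrt (t ^ 2 + (z - zs i) ^ 2) -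
        (z - zs i) * Real.log ((Real.sqrt (t ^ 2 + (z - zs i) ^ 2) + (z - zs i)) /
          (Real.sqrt (t ^ 2 + (z - zs i) ^ 2) - (z - zs i)))))
        (∑ i, a i * (2 * Real.sqrt (ρ ^ 2 + (z - zs i) ^ 2) / ρ)) ρ :=
      HasDerivAt.fun_sum fun i _ => term_rho (a i) (z - zs i) ρ hρ
    have htot := h0.add hs
    simp only [genU, dd, add_sub_assoc, sub_add]
    refine htot.congr_deriv (Eq.symm ?_)
    rw [mul_add, Finset.mul_sum]
    congr 1
    · ring
    · exact Finset.sum_congr rfl fun i _ => by ring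
  · have h0 : HasDerivAt (fun _ : ℝ => A * Real.log (ρ ^ 2)) 0 z :=
      hasDerivAt_const z _
    have hs : HasDerivAt (fun t : ℝ => ∑ i, a i * (2 * Real.sqrt (ρ ^ 2 + (t - zs i) ^ 2) -
        (t - zs i) * Real.log ((Real.sqrt (ρ ^ 2 + (t - zs i) ^ 2) + (t - zs i)) /
          (Real.sqrt (ρ ^ 2 + (t - zs i) ^ 2) - (t - zs i)))))
        (∑ i, -(a i * Real.log ((Real.sqrt (ρ ^ 2 + (z - zs i) ^ 2) + (z - zs i)) /
          (Real.sqrt (ρ ^ 2 + (z - zs i) ^ 2) - (z - zs i))))) z :=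
      HasDerivAt.fun_sum fun i _ => term_z (a i) (zs i) ρ z hρ
    have htot := h0.add hs
    simp only [genU, dd, add_sub_assoc, sub_add]
    refine htot.congr_deriv (Eq.symm ?_)
    rw [zero_add, ← Finset.sum_neg_distrib]
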